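/- Thermal two-qubit heat formula: if the two-qubit state ρ has thermal marginals at inverse temperatures β_A, β_B for local Hamiltonians H_i = (ω/2)(1-σ_z), then the diagonal entries satisfy p_{01} - p_{10} = (1/2)[tanh(ωβ_A/2) - tanh(ωβ_B/2)], and hence the resonant heat formula becomes ⟨Q_A⟩ = ω[(1/2)sin²(gt)(tanh(ωβ_A/2) - tanh(ωβ_B/2)) + η sin(2gt) sin(ξ-θ)]. -/

import Mathlib

open Matrix ComplexOrder Kronecker NormedSpace

/-- The Pauli `Z` matrix. -/
def σz : Matrix (Fin 2) (Fin 2) ℂ := Matrix.diagonal ![1, -1]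

/-- The Zeeman Hamiltonian `(ω/2)(1 - σ_z)`. -/
noncomputable def zeeman (ω : ℝ) : Matrix (Fin 2) (Fin 2) ℂ :=
  ((ω / 2 : ℝ) : ℂ) • ((1 : Matrix (Fin 2) (Fin 2) ℂ) - σz)

/-- The matrix unit `|p⟩⟨q|` on the two-qubit space. -/
def E (p q : Fin 2 × Fin 2) : Matrix (Fin 2 × Fin 2) (Fin 2 × Fin 2) ℂ :=
  Matrix.single p q 1

/-- The general energy-conserving resonant two-qubit interaction Hamiltonian
`g(a(|01⟩⟨01|+|10⟩⟨10|) + e^{iθ}|01⟩⟨10| + e^{-iθ}|10⟩⟨01|)`. -/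
noncomputable def HIres (g a θ : ℝ) : Matrix (Fin 2 × Fin 2) (Fin 2 × Fin 2) ℂ :=
  (g : ℂ) • ((a : ℂ) • (E (0, 1) (0, 1) + E (1, 0) (1, 0))
    + Complex.exp (θ * Complex.I) • E (0, 1) (1, 0)
    + Complex.exp (-θ * Complex.I) • E (1, 0) (0, 1))

/-- Partial trace over the second qubit. -/
noncomputable def ptraceB (ρ : Matrix (Fin 2 × Fin 2) (Fin 2 × Fin 2) ℂ) :
    Matrix (Fin 2) (Fin 2) ℂ :=
  Matrix.of fun i j => ∑ k : Fin 2, ρ (i, k) (j, k)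

/-- Partial trace over the first qubit. -/
noncomputable def ptraceA (ρ : Matrix (Fin 2 × Fin 2) (Fin 2 × Fin 2) ℂ) :
    Matrix (Fin 2) (Fin 2) ℂ :=
  Matrix.of fun i j => ∑ k : Fin 2, ρ (k, i) (k, j)

/-- The single-qubit Gibbs state for `H = (ω/2)(1-σ_z)`, i.e.
`diag(1, e^{-ωβ})/Z` with `Z = 1 + e^{-ωβ}`. -/
noncomputable def qubitGibbs (ω β : ℝ) : Matrix (Fin 2) (Fin 2) ℂ :=
  Matrix.diagonal ![((1 / (1 + Real.exp (-(ω * β))) : ℝ) : ℂ),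
    ((Real.exp (-(ω * β)) / (1 + Real.exp (-(ω * β))) : ℝ) : ℂ)]

lemma Eapply (p q i j : Fin 2 × Fin 2) :
    E p q i j = if p = i ∧ q = j then 1 else 0 := rfl

noncomputable def Wm (v : ℂ) : Matrix (Fin 2 × Fin 2) (Fin 2 × Fin 2) ℂ :=
  E (0,0) (0,0) + E (0,1) (0,1) + E (0,1) (1,0)
    + v • E (1,0) (0,1) - v • E (1,0) (1,0) + E (1,1) (1,1)

noncomputable def Wi (u : ℂ) : Matrix (Fin 2 × Fin 2) (Fin 2 × Fin 2) ℂ :=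
  E (0,0) (0,0) + (1/2 : ℂ) • E (0,1) (0,1) + (u/2) • E (0,1) (1,0)
    + (1/2 : ℂ) • E (1,0) (0,1) - (u/2) • E (1,0) (1,0) + E (1,1) (1,1)

noncomputable def dfun (g a t : ℝ) : Fin 2 × Fin 2 → ℂ := fun p =>
  if p = (0,1) then -(t:ℂ) * Complex.I * (g * (a+1))
  else if p = (1,0) then -(t:ℂ) * Complex.I * (g * (a-1)) else 0

noncomputable def dvec (dp dm : ℂ) : Fin 2 × Fin 2 → ℂ := fun p =>
  if p = (0,1) then dp else if p = (1,0) then dm else 1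

noncomputable def Uex (φ c s u v : ℂ) : Matrix (Fin 2 × Fin 2) (Fin 2 × Fin 2) ℂ :=
  E (0,0) (0,0) + E (1,1) (1,1) + (φ*c) • (E (0,1) (0,1) + E (1,0) (1,0))
    + (-Complex.I*φ*s*u) • E (0,1) (1,0) + (-Complex.I*φ*s*v) • E (1,0) (0,1)

set_option maxHeartbeats 1000000 in
lemma hWWi {u v : ℂ} (huv : u * v = 1) : Wm v * Wi u = 1 := by
  have hu : u ≠ 0 := left_ne_zero_of_mul_eq_one huv
  have hv : v = u⁻¹ := eq_inv_of_mul_eq_one_left (by linear_combination huv)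
  subst hv
  ext ⟨i, k⟩ ⟨j, l⟩
  fin_cases i <;> fin_cases k <;> fin_cases j <;> fin_cases l <;>
    simp only [Wm, Wi, Matrix.mul_apply, Fintype.sum_prod_type, Fin.sum_univ_two,
      Matrix.add_apply, Matrix.sub_apply, Matrix.smul_apply, Eapply, smul_eq_mul,
      Matrix.one_apply, Prod.mk.injEq] <;>
    norm_num <;> field_simp <;> ring1

set_option maxHeartbeats 1000000 in
lemma hWiW {u v : ℂ} (huv : u * v = 1) : Wi u * Wm v = 1 := by
  have hu : u ≠ 0 := left_ne_zero_of_mul_eq_one huv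
  have hv : v = u⁻¹ := eq_inv_of_mul_eq_one_left (by linear_combination huv)
  subst hv
  ext ⟨i, k⟩ ⟨j, l⟩
  fin_cases i <;> fin_cases k <;> fin_cases j <;> fin_cases l <;>
    simp only [Wm, Wi, Matrix.mul_apply, Fintype.sum_prod_type, Fin.sum_univ_two,
      Matrix.add_apply, Matrix.sub_apply, Matrix.smul_apply, Eapply, smul_eq_mul,
      Matrix.one_apply, Prod.mk.injEq] <;>
    norm_num <;> field_simp <;> ring1

set_option maxHeartbeats 1000000 in
lemma hconjA (g a θ t : ℝ) :
    (-(t:ℂ) * Complex.I) • HIres g a θ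
      = Wm (Complex.exp (-θ * Complex.I)) * Matrix.diagonal (dfun g a t)
          * Wi (Complex.exp (θ * Complex.I)) := by
  simp only [HIres]
  set u := Complex.exp (θ * Complex.I) with hudef
  set v := Complex.exp (-θ * Complex.I) with hvdef
  have huv : u * v = 1 := by
    rw [hudef, hvdef, ← Complex.exp_add]; ring_nf; exact Complex.exp_zero
  have hu : u ≠ 0 := left_ne_zero_of_mul_eq_one huv
  have hv : v = u⁻¹ := eq_inv_of_mul_eq_one_left (by linear_combination huv)
  clear_value u v
  subst hv
  ext ⟨i, k⟩ ⟨j, l⟩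
  fin_cases i <;> fin_cases k <;> fin_cases j <;> fin_cases l <;>
    simp only [Wm, Wi, dfun, Matrix.mul_apply, Fintype.sum_prod_type,
      Fin.sum_univ_two, Matrix.add_apply, Matrix.sub_apply, Matrix.smul_apply, Eapply,
      smul_eq_mul, Matrix.diagonal_apply, Prod.mk.injEq] <;>
    norm_num <;> field_simp <;> ring1

lemma hexpD (g a t : ℝ) :
    exp (Matrix.diagonal (dfun g a t))
      = Matrix.diagonal (dvec (Complex.exp (-(t:ℂ) * Complex.I * (g * (a+1))))
          (Complex.exp (-(t:ℂ) * Complex.I * (g * (a-1))))) := by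
  rw [Matrix.exp_diagonal]
  have h : exp (dfun g a t) = dvec (Complex.exp (-(t:ℂ) * Complex.I * (g * (a+1))))
      (Complex.exp (-(t:ℂ) * Complex.I * (g * (a-1)))) := by
    funext p
    rw [Pi.coe_exp, ← Complex.exp_eq_exp_ℂ]
    obtain ⟨i, k⟩ := p
    fin_cases i <;> fin_cases k <;>
      simp [dfun, dvec, Prod.ext_iff, Complex.exp_zero, show ((0:Fin 2) ≠ 1) by decide,
        show ((1:Fin 2) ≠ 0) by decide] <;> norm_num
  rw [h]

set_option maxHeartbeats 1000000 in
lemma hWexpD (u v φ c s dp dm : ℂ) (huv : u * v = 1)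
    (hp : dp = φ * (c - Complex.I * s)) (hm : dm = φ * (c + Complex.I * s)) :
    Wm v * Matrix.diagonal (dvec dp dm) * Wi u = Uex φ c s u v := by
  have hu : u ≠ 0 := left_ne_zero_of_mul_eq_one huv
  have hv : v = u⁻¹ := eq_inv_of_mul_eq_one_left (by linear_combination huv)
  subst hv hp hm
  ext ⟨i, k⟩ ⟨j, l⟩
  fin_cases i <;> fin_cases k <;> fin_cases j <;> fin_cases l <;>
    simp only [Wm, Wi, Uex, dvec, Matrix.mul_apply, Fintype.sum_prod_type,
      Fin.sum_univ_two, Matrix.add_apply, Matrix.sub_apply, Matrix.smul_apply, Eapply,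
      smul_eq_mul, Matrix.diagonal_apply, Prod.mk.injEq] <;>
    norm_num <;> field_simp <;> ring1

lemma hrot (r : ℝ) :
    Complex.exp (-(r:ℂ) * Complex.I) = (Real.cos r : ℂ) - Real.sin r * Complex.I := by
  rw [show -(r:ℂ) * Complex.I = (((-r : ℝ)):ℂ) * Complex.I by push_cast; ring,
    Complex.exp_mul_I, ← Complex.ofReal_cos, ← Complex.ofReal_sin]
  push_cast
  simp [Real.cos_neg, Real.sin_neg]
  ring

set_option maxHeartbeats 1000000 in
lemma hUeq (g a θ t : ℝ) :
    exp ((-(t:ℂ) * Complex.I) • HIres g a θ)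
      = Uex (Complex.exp (-(t:ℂ) * Complex.I * (g * a))) (Real.cos (g*t)) (Real.sin (g*t))
          (Complex.exp (θ * Complex.I)) (Complex.exp (-θ * Complex.I)) := by
  have huv : Complex.exp (θ * Complex.I) * Complex.exp (-θ * Complex.I) = 1 := by
    rw [← Complex.exp_add]; ring_nf; exact Complex.exp_zero
  set Wu : (Matrix (Fin 2 × Fin 2) (Fin 2 × Fin 2) ℂ)ˣ :=
    ⟨Wm (Complex.exp (-θ * Complex.I)), Wi (Complex.exp (θ * Complex.I)),
      hWWi huv, hWiW huv⟩ with hWu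
  rw [hconjA]
  have h1 : Wm (Complex.exp (-θ * Complex.I)) * Matrix.diagonal (dfun g a t)
      * Wi (Complex.exp (θ * Complex.I))
      = Wu.val * Matrix.diagonal (dfun g a t) * (Wu⁻¹).val := rfl
  rw [h1, Matrix.exp_units_conj, hexpD]
  show Wm _ * _ * Wi _ = _
  apply hWexpD _ _ _ _ _ _ _ huv
  · rw [show -(t:ℂ) * Complex.I * (g * (a+1))
        = -(t:ℂ) * Complex.I * (g * a) + -(((g*t) : ℝ):ℂ) * Complex.I by push_cast; ring,
      Complex.exp_add, hrot]
    ring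
  · rw [show -(t:ℂ) * Complex.I * (g * (a-1))
        = -(t:ℂ) * Complex.I * (g * a) + -((((-(g*t))) : ℝ):ℂ) * Complex.I by push_cast; ring,
      Complex.exp_add, hrot]
    push_cast [Real.cos_neg, Real.sin_neg]
    ring

noncomputable def Mex (ω : ℝ) (c s u v : ℂ) : Matrix (Fin 2 × Fin 2) (Fin 2 × Fin 2) ℂ :=
  ((ω:ℂ)*s^2) • (E (0,1) (0,1) - E (1,0) (1,0))
    + ((ω:ℂ)*s*c*Complex.I) • (u • E (0,1) (1,0) - v • E (1,0) (0,1))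

set_option maxHeartbeats 2000000 in
lemma hM (ω : ℝ) (φ ψ u v c s : ℂ) (hφψ : φ*ψ = 1) (huv : u*v = 1) (hsc : c^2+s^2 = 1)
    (hsφ : star φ = ψ) (hsu : star u = v) (hsv : star v = u)
    (hc : star c = c) (hs : star s = s) :
    (Uex φ c s u v)ᴴ * ((zeeman ω) ⊗ₖ (1 : Matrix (Fin 2) (Fin 2) ℂ)) * Uex φ c s u v
      - (zeeman ω) ⊗ₖ (1 : Matrix (Fin 2) (Fin 2) ℂ) = Mex ω c s u v := by
  have hsI : star Complex.I = -Complex.I := by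
    simp [Complex.star_def, Complex.conj_I]
  ext ⟨i, k⟩ ⟨j, l⟩
  fin_cases i <;> fin_cases k <;> fin_cases j <;> fin_cases l <;>
    simp only [Uex, Mex, zeeman, σz, Matrix.conjTranspose_apply, Matrix.mul_apply,
      Fintype.sum_prod_type, Fin.sum_univ_two, Matrix.add_apply, Matrix.sub_apply,
      Matrix.smul_apply, Eapply, smul_eq_mul, Matrix.kroneckerMap_apply,
      Matrix.one_apply, Matrix.diagonal_apply, Prod.mk.injEq,
      star_add, star_mul', star_neg, star_one, star_zero, hsI, hsφ, hsu, hsv, hc, hs,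
      Matrix.cons_val', Matrix.cons_val_zero, Matrix.cons_val_one, Matrix.head_cons,
      Matrix.empty_val', Matrix.cons_val_fin_one] <;>
    push_cast <;>
    norm_num <;>
    ring_nf <;>
    (try simp only [Complex.I_sq]) <;>
    first
      | ring1
      | linear_combination ((ω:ℂ)*s^2*u*v)*hφψ + ((ω:ℂ)*s^2)*huv
      | linear_combination ((ω:ℂ)*c^2)*hφψ + (ω:ℂ)*hsc
      | linear_combination (Complex.I*(ω:ℂ)*s*c*u)*hφψ
      | linear_combination (-Complex.I*(ω:ℂ)*s*c*v)*hφψ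
      | linear_combination (-Complex.I*(ω:ℂ)*s*c*u)*hφψ
      | linear_combination (Complex.I*(ω:ℂ)*s*c*v)*hφψ
      | linear_combination (-((ω:ℂ)*s^2*u*v))*hφψ - ((ω:ℂ)*s^2)*huv
      | linear_combination (-((ω:ℂ)*c^2))*hφψ - (ω:ℂ)*hsc


lemma aux0 (x : ℝ) : 1/(1+Real.exp (-x)) = (1 + Real.tanh (x/2))/2 := by
  rw [Real.tanh_eq_sinh_div_cosh, Real.sinh_eq, Real.cosh_eq]
  have h1 : (0:ℝ) < Real.exp (x/2) + Real.exp (-(x/2)) := by positivity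
  have h2 : (0:ℝ) < 1 + Real.exp (-x) := by positivity
  have e1 : Real.exp (x/2) * Real.exp (x/2) = Real.exp x := by rw [← Real.exp_add]; ring_nf
  have e2 : Real.exp (x/2) * Real.exp (-(x/2)) = 1 := by
    rw [← Real.exp_add]; ring_nf; exact Real.exp_zero
  have e3 : Real.exp (-(x/2)) * Real.exp (-(x/2)) = Real.exp (-x) := by
    rw [← Real.exp_add]; ring_nf
  field_simp
  have e4 : Real.exp (-x/2) = Real.exp (-(x/2)) := by ring_nf
  linear_combination (2*Real.exp (x/2))*e3 - (2*Real.exp (-(x/2)))*e2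

lemma aux0C (x : ℝ) : (1 + Complex.exp (-(x:ℂ)))⁻¹ = (((1 + Real.tanh (x/2))/2 : ℝ) : ℂ) := by
  have h : (1:ℂ) + Complex.exp (-(x:ℂ)) = ((1 + Real.exp (-x) : ℝ) : ℂ) := by
    push_cast; ring_nf
  rw [h, ← Complex.ofReal_inv]
  norm_cast
  rw [← aux0]
  ring


/-- Thermal two-qubit heat formula: thermal marginals force
`p₀₁ − p₁₀ = (1/2)[tanh(ωβ_A/2) − tanh(ωβ_B/2)]`, whence
`⟨Q_A⟩ = ω[(1/2)sin²(gt)(tanh(ωβ_A/2) − tanh(ωβ_B/2)) + η sin(2gt) sin(ξ−θ)]`. -/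
theorem thermal_two_qubit_heat
    (ω g a θ ξ η t βA βB : ℝ) (hg : 0 < g)
    (ρ : Matrix (Fin 2 × Fin 2) (Fin 2 × Fin 2) ℂ) (hρ : ρ.PosSemidef)
    (hρ1 : ρ.trace = 1)
    (hmargA : ptraceB ρ = qubitGibbs ω βA) (hmargB : ptraceA ρ = qubitGibbs ω βB)
    (hcoh : ρ (0, 1) (1, 0) = (η : ℂ) * Complex.exp (ξ * Complex.I))
    (U : Matrix (Fin 2 × Fin 2) (Fin 2 × Fin 2) ℂ)
    (hU : U = exp ((-(t : ℂ) * Complex.I) • HIres g a θ)) :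
    ρ (0, 1) (0, 1) - ρ (1, 0) (1, 0)
        = (((1 / 2) * (Real.tanh (ω * βA / 2) - Real.tanh (ω * βB / 2)) : ℝ) : ℂ)
      ∧ (ρ * (Uᴴ * (zeeman ω ⊗ₖ (1 : Matrix (Fin 2) (Fin 2) ℂ)) * U
          - zeeman ω ⊗ₖ (1 : Matrix (Fin 2) (Fin 2) ℂ))).trace
        = ((ω * ((1 / 2) * Real.sin (g * t) ^ 2
              * (Real.tanh (ω * βA / 2) - Real.tanh (ω * βB / 2))
            + η * Real.sin (2 * g * t) * Real.sin (ξ - θ)) : ℝ) : ℂ) := by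
  -- part 1
  have h1 : ptraceB ρ 0 0 = qubitGibbs ω βA 0 0 := by rw [hmargA]
  have h2 : ptraceA ρ 0 0 = qubitGibbs ω βB 0 0 := by rw [hmargB]
  simp [ptraceB, qubitGibbs, Fin.sum_univ_two] at h1
  simp [ptraceA, qubitGibbs, Fin.sum_univ_two] at h2
  have key1 : ρ (0, 1) (0, 1) - ρ (1, 0) (1, 0)
      = (((1 / 2) * (Real.tanh (ω * βA / 2) - Real.tanh (ω * βB / 2)) : ℝ) : ℂ) := by
    have key : (((1 / 2) * (Real.tanh (ω * βA / 2) - Real.tanh (ω * βB / 2)) : ℝ) : ℂ)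
        = (1 + Complex.exp (-(↑ω * ↑βA)))⁻¹ - (1 + Complex.exp (-(↑ω * ↑βB)))⁻¹ := by
      have a1 := aux0C (ω * βA)
      have a2 := aux0C (ω * βB)
      push_cast at a1 a2 ⊢
      rw [a1, a2]
      ring
    rw [key]
    linear_combination h1 - h2
  refine ⟨key1, ?_⟩
  -- hermitian conjugate entry
  have h10 : ρ (1, 0) (0, 1) = (η : ℂ) * Complex.exp (-ξ * Complex.I) := by
    have hherm := hρ.1
    have hst : ρ (1, 0) (0, 1) = star (ρ (0, 1) (1, 0)) := by
      nth_rewrite 1 [← hherm]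
      rw [Matrix.conjTranspose_apply]
    rw [hst, hcoh, star_mul']
    rw [show star ((η:ℂ)) = (η:ℂ) from Complex.conj_ofReal η]
    rw [show star (Complex.exp (ξ * Complex.I)) = Complex.exp (-ξ * Complex.I) by
      rw [Complex.star_def, ← Complex.exp_conj]
      congr 1
      simp only [_root_.map_mul, Complex.conj_ofReal, Complex.conj_I]
      ring]
  -- closed form for U
  subst hU
  rw [hUeq g a θ t]
  -- apply hM
  have hφψ : Complex.exp (-(t:ℂ) * Complex.I * (g * a))
      * Complex.exp ((t:ℂ) * Complex.I * (g * a)) = 1 := by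
    rw [← Complex.exp_add]; ring_nf; exact Complex.exp_zero
  have huv : Complex.exp ((θ:ℝ) * Complex.I) * Complex.exp (-(θ:ℝ) * Complex.I) = 1 := by
    rw [← Complex.exp_add]; ring_nf; exact Complex.exp_zero
  have hsc : ((Real.cos (g*t) : ℝ) : ℂ)^2 + ((Real.sin (g*t) : ℝ) : ℂ)^2 = 1 := by
    norm_cast
    exact Real.cos_sq_add_sin_sq (g*t)
  have hsφ : star (Complex.exp (-(t:ℂ) * Complex.I * (g * a)))
      = Complex.exp ((t:ℂ) * Complex.I * (g * a)) := by
    rw [Complex.star_def, ← Complex.exp_conj]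
    congr 1
    simp only [_root_.map_mul, map_neg, Complex.conj_ofReal, Complex.conj_I]
    ring
  have hsu : star (Complex.exp ((θ:ℝ) * Complex.I)) = Complex.exp (-(θ:ℝ) * Complex.I) := by
    rw [Complex.star_def, ← Complex.exp_conj]
    congr 1
    simp only [_root_.map_mul, map_neg, Complex.conj_ofReal, Complex.conj_I]
    ring
  have hsv : star (Complex.exp (-(θ:ℝ) * Complex.I)) = Complex.exp ((θ:ℝ) * Complex.I) := by
    rw [Complex.star_def, ← Complex.exp_conj]
    congr 1
    simp only [_root_.map_mul, map_neg, Complex.conj_ofReal, Complex.conj_I]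
    ring
  have hc : star ((Real.cos (g*t) : ℝ) : ℂ) = ((Real.cos (g*t) : ℝ) : ℂ) :=
    Complex.conj_ofReal _
  have hs : star ((Real.sin (g*t) : ℝ) : ℂ) = ((Real.sin (g*t) : ℝ) : ℂ) :=
    Complex.conj_ofReal _
  rw [hM ω _ (Complex.exp ((t:ℂ) * Complex.I * (g * a))) _ _ _ _ hφψ huv hsc hsφ hsu hsv hc hs]
  -- trace computation
  simp only [Mex, Matrix.trace, Matrix.diag_apply, Matrix.mul_apply, Fintype.sum_prod_type,
    Fin.sum_univ_two, Matrix.add_apply, Matrix.sub_apply, Matrix.smul_apply, Eapply,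
    smul_eq_mul, Prod.mk.injEq]
  norm_num
  rw [hcoh, h10]
  push_cast at key1
  rw [show (2:ℂ) * (g:ℂ) * (t:ℂ) = 2*((g:ℂ)*(t:ℂ)) by ring, Complex.sin_two_mul,
    Complex.sin_sub]
  rw [show -((θ:ℂ) * Complex.I) = (-(θ:ℂ)) * Complex.I by ring]
  rw [Complex.exp_mul_I, Complex.exp_mul_I, Complex.exp_mul_I, Complex.exp_mul_I]
  simp only [Complex.cos_neg, Complex.sin_neg]
  ring_nf
  simp only [Complex.I_sq]
  ring_nf at key1
  linear_combination ((ω:ℂ) * Complex.sin ((g:ℂ)*(t:ℂ))^2) * key1
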